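/- Let G be a finite group and X ⊆ G. Then X is a CI-subset of G if and only if any two regular subgroups of Aut(Cay(G,X)) that are isomorphic to G are conjugate in Aut(Cay(G,X)). -/

import Mathlib

open Pointwise

/-! ### Cayley digraphs and CI-subsets (groups written additively) -/

/-- The arc set `R(S) = {(g, s+g) : g ∈ G, s ∈ S}` of the Cayley digraph `Cay(G,S)`. -/
def arcs {G : Type*} [AddGroup G] (S : Set G) : Set (G × G) :=
  {a | ∃ s ∈ S, a.2 = s + a.1}

/-- The image `R^f` of a set of arcs under a permutation `f`. -/
def pmap {G : Type*} (f : Equiv.Perm G) (R : Set (G × G)) : Set (G × G) :=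
  (fun a => (f a.1, f a.2)) '' R

/-- `S ⊆ G` is a CI-subset: every Cayley digraph isomorphic to `Cay(G,S)` is Cayley
isomorphic to it. -/
def IsCISubset {G : Type*} [AddGroup G] (S : Set G) : Prop :=
  ∀ T : Set G, (∃ f : Equiv.Perm G, pmap f (arcs S) = arcs T) →
    ∃ φ : G ≃+ G, ⇑φ '' S = T

/-- `G` is a DCI-group: every subset of `G` is a CI-subset. -/
def IsDCI (G : Type*) [AddGroup G] : Prop := ∀ S : Set G, IsCISubset S

/-! ### S-rings, given by their partitions into basic sets.

The condition that the ℤ-span of the blocks is a subring of the group ring is encoded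
combinatorially: the number of ways to write an element as a sum `x + y` with `x ∈ X`,
`y ∈ Y` (for blocks `X, Y`) is constant on each block. -/

structure SRing (G : Type*) [AddGroup G] where
  blocks : Set (Set G)
  nonempty_mem : ∀ X ∈ blocks, X.Nonempty
  existsUnique_mem : ∀ g : G, ∃! X, X ∈ blocks ∧ g ∈ X
  zero_mem : ({0} : Set G) ∈ blocks
  neg_mem : ∀ X ∈ blocks, -X ∈ blocks
  count_const : ∀ X ∈ blocks, ∀ Y ∈ blocks, ∀ Z ∈ blocks, ∀ z ∈ Z, ∀ z' ∈ Z,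
    {a : G × G | a.1 ∈ X ∧ a.2 ∈ Y ∧ a.1 + a.2 = z}.ncard =
      {a : G × G | a.1 ∈ X ∧ a.2 ∈ Y ∧ a.1 + a.2 = z'}.ncard

/-- The automorphisms of an S-ring with family of basic sets `Bl`:
permutations preserving each arc set `R(X)`, `X ∈ Bl`. -/
def autPerm {G : Type*} [AddGroup G] (Bl : Set (Set G)) : Set (Equiv.Perm G) :=
  {f | ∀ X ∈ Bl, pmap f (arcs X) = arcs X}

/-- The isomorphisms from an S-ring with basic sets `Bl` onto some S-ring over `G`. -/
def isoPerm {G : Type*} [AddGroup G] (Bl : Set (Set G)) : Set (Equiv.Perm G) :=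
  {f | ∃ B : SRing G,
    {R | ∃ X ∈ Bl, R = pmap f (arcs X)} = {R | ∃ Y ∈ B.blocks, R = arcs Y}}

/-- An S-ring is CI if `iso(A) = Aut(A)Aut(G)` (composition: first the S-ring
automorphism, then the group automorphism). -/
def IsCIBlocks {G : Type*} [AddGroup G] (Bl : Set (Set G)) : Prop :=
  isoPerm Bl = {f | ∃ γ ∈ autPerm Bl, ∃ φ : G ≃+ G, ∀ x, f x = φ (γ x)}

/-- The right translation `x ↦ x + g` as a permutation. -/
def addRightPerm {G : Type*} [AddGroup G] (g : G) : Equiv.Perm G := Equiv.addRight g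

/-- `G_r`, the set of right translations of `G`. -/
def rSet (G : Type*) [AddGroup G] : Set (Equiv.Perm G) := Set.range addRightPerm

/-- The basic sets of `V(K,G)`: the orbits on `G` of the stabilizer `K_e` of the
identity in `K`. -/
def VBlocks {G : Type*} [AddGroup G] (K : Set (Equiv.Perm G)) : Set (Set G) :=
  {O | ∃ g : G, O = {h | ∃ k ∈ K, k 0 = 0 ∧ k g = h}}

/-- An S-ring is schurian if it equals `V(K,G)` for some `G_r ≤ K ≤ Sym(G)`. -/
def IsSchurianBlocks {G : Type*} [AddGroup G] (Bl : Set (Set G)) : Prop :=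
  ∃ K : Subgroup (Equiv.Perm G), rSet G ⊆ (K : Set (Equiv.Perm G)) ∧
    Bl = VBlocks (K : Set (Equiv.Perm G))

/-- `f` lies in the 2-closure of `K`: on every pair it agrees with some member of `K`. -/
def in2Closure {G : Type*} (K : Set (Equiv.Perm G)) (f : Equiv.Perm G) : Prop :=
  ∀ a b : G, ∃ k ∈ K, k a = f a ∧ k b = f b

/-- `K` is 2-closed: `K = K^(2)`. -/
def Is2Closed {G : Type*} (K : Subgroup (Equiv.Perm G)) : Prop :=
  ∀ f, in2Closure (K : Set (Equiv.Perm G)) f → f ∈ K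

/-- Conjugate `S^γ` of a set of permutations. -/
def conjSet {G : Type*} (γ : Equiv.Perm G) (S : Set (Equiv.Perm G)) : Set (Equiv.Perm G) :=
  (fun s => γ⁻¹ * s * γ) '' S

/-- `K1 ⪯_G K2`: `K1` is a `G`-complete subgroup of `K2`. -/
def GComplete {G : Type*} [AddGroup G] (K1 K2 : Subgroup (Equiv.Perm G)) : Prop :=
  K1 ≤ K2 ∧ ∀ γ : Equiv.Perm G, conjSet γ (rSet G) ⊆ (K2 : Set (Equiv.Perm G)) →
    ∃ δ ∈ K2, conjSet δ (conjSet γ (rSet G)) ⊆ (K1 : Set (Equiv.Perm G))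

/-- `K ∈ Sup_2(G_r)`: `K` is a 2-closed subgroup of `Sym(G)` containing `G_r`. -/
def InSup2 {G : Type*} [AddGroup G] (K : Subgroup (Equiv.Perm G)) : Prop :=
  rSet G ⊆ (K : Set (Equiv.Perm G)) ∧ Is2Closed K

/-- `K ∈ Sup_2^min(G_r)`: `K` is a minimal element of `(Sup_2(G_r), ⪯_G)`. -/
def InSup2Min {G : Type*} [AddGroup G] (K : Subgroup (Equiv.Perm G)) : Prop :=
  InSup2 K ∧ ∀ K' : Subgroup (Equiv.Perm G), InSup2 K' → GComplete K' K → K' = K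

/-! ### A-sets, A-subgroups, sections, radicals, products -/

/-- `X` is an `A`-set: a union of basic sets. -/
def IsASet {G : Type*} [AddGroup G] (Bl : Set (Set G)) (X : Set G) : Prop :=
  ∃ C ⊆ Bl, X = ⋃₀ C

/-- An `A`-subgroup. -/
def IsASubgroup {G : Type*} [AddGroup G] (Bl : Set (Set G)) (U : AddSubgroup G) : Prop :=
  IsASet Bl (U : Set G)

/-- The radical `rad(X) = {g : g + X = X + g = X}`. -/
def radSet {G : Type*} [AddGroup G] (X : Set G) : Set G :=
  {g | (fun x => g + x) '' X = X ∧ (fun x => x + g) '' X = X}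

/-- `A` is the `S`-wreath (generalized wreath) product for the section `S = U/L`. -/
def IsWreath {G : Type*} [AddGroup G] (Bl : Set (Set G)) (U L : AddSubgroup G) : Prop :=
  IsASubgroup Bl U ∧ IsASubgroup Bl L ∧ L ≤ U ∧ L.Normal ∧
    ∀ X ∈ Bl, ¬X ⊆ (U : Set G) → (L : Set G) ⊆ radSet X

/-- Nontrivial (proper) `S`-wreath product. -/
def IsNontrivialWreath {G : Type*} [AddGroup G] (Bl : Set (Set G))
    (U L : AddSubgroup G) : Prop :=
  IsWreath Bl U L ∧ L ≠ ⊥ ∧ U ≠ ⊤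

/-- `A` is decomposable: a nontrivial generalized wreath product. -/
def IsDecomposable {G : Type*} [AddGroup G] (Bl : Set (Set G)) : Prop :=
  ∃ U L : AddSubgroup G, IsNontrivialWreath Bl U L

/-! ### Cyclotomic S-rings, Cayley minimality, 2-minimality, normality -/

/-- The set of orbits on `G` of a group `M` of automorphisms of `G`. -/
def autOrbits {G : Type*} [AddGroup G] (M : AddSubgroup (AddAut G)) : Set (Set G) :=
  {O | ∃ g : G, O = {h | ∃ φ ∈ M, φ g = h}}

/-- An S-ring is cyclotomic if its basic sets are the orbits of a group of
automorphisms of `G`. -/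
def IsCyclotomic {G : Type*} [AddGroup G] (Bl : Set (Set G)) : Prop :=
  ∃ M : AddSubgroup (AddAut G), Bl = autOrbits M

/-- `aut_G(A) = Aut(A) ∩ Aut(G)`. -/
def autAddSet {G : Type*} [AddGroup G] (Bl : Set (Set G)) : Set (AddAut G) :=
  {φ | (φ : G ≃+ G).toEquiv ∈ autPerm Bl}

/-- Two sets of automorphisms have the same orbits on `G`. -/
def sameAutOrbits {G : Type*} [AddGroup G] (K M : Set (AddAut G)) : Prop :=
  ∀ g : G, {h | ∃ φ ∈ K, φ g = h} = {h | ∃ φ ∈ M, φ g = h}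

/-- A (cyclotomic) S-ring is Cayley minimal if the only subgroup of `Aut(G)` Cayley
equivalent to `aut_G(A)` is `aut_G(A)` itself. -/
def IsCayleyMinimal {G : Type*} [AddGroup G] (Bl : Set (Set G)) : Prop :=
  IsCyclotomic Bl ∧ ∀ K : AddSubgroup (AddAut G),
    sameAutOrbits (K : Set (AddAut G)) (autAddSet Bl) →
      (K : Set (AddAut G)) = autAddSet Bl

/-- Two sets of permutations have the same orbits on `G × G`. -/
def samePairOrbits {G : Type*} (K M : Set (Equiv.Perm G)) : Prop :=
  ∀ a b : G, {c : G × G | ∃ f ∈ K, (f a, f b) = c} = {c : G × G | ∃ f ∈ M, (f a, f b) = c}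

/-- An S-ring is 2-minimal if the only subgroup of `Sym(G)` containing `G_r` and
2-equivalent to `Aut(A)` is `Aut(A)` itself. -/
def Is2Minimal {G : Type*} [AddGroup G] (Bl : Set (Set G)) : Prop :=
  ∀ K : Subgroup (Equiv.Perm G), rSet G ⊆ (K : Set (Equiv.Perm G)) →
    samePairOrbits (K : Set (Equiv.Perm G)) (autPerm Bl) →
      (K : Set (Equiv.Perm G)) = autPerm Bl

/-- An S-ring is normal if `G_r` is normal in `Aut(A)`. -/
def IsNormalBlocks {G : Type*} [AddGroup G] (Bl : Set (Set G)) : Prop :=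
  ∀ σ ∈ autPerm Bl, ∀ t ∈ rSet G, σ * t * σ⁻¹ ∈ rSet G

/-- A set of permutations normalizes another one. -/
def normalizesInto {M : Type*} [Group M] (Δ N : Set M) : Prop :=
  ∀ σ ∈ Δ, ∀ t ∈ N, σ * t * σ⁻¹ ∈ N

/-! ### Kernels, restriction to subgroups, quotients and sections -/

/-- `Aut(A)_{G/L}`: the automorphisms of the S-ring fixing every `L`-coset setwise. -/
def kernelPerm {G : Type*} [AddGroup G] (Bl : Set (Set G)) (L : AddSubgroup G) :
    Set (Equiv.Perm G) :=
  {f | f ∈ autPerm Bl ∧ ∀ g : G, ⇑f '' ((L : Set G) + {g}) = (L : Set G) + {g}}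

/-- The basic sets of `A_U` (for an `A`-subgroup `U`), as subsets of `U`. -/
def subBlocks {G : Type*} [AddGroup G] (Bl : Set (Set G)) (U : AddSubgroup G) :
    Set (Set U) :=
  {Z | ∃ X ∈ Bl, X ⊆ (U : Set G) ∧ Z = ((Subtype.val) ⁻¹' X : Set U)}

/-- The basic sets of `A_{G/L}`: images of basic sets under `G → G/L`. -/
def quotBlocks {G : Type*} [AddGroup G] (Bl : Set (Set G)) (L : AddSubgroup G) :
    Set (Set (G ⧸ L)) :=
  {Z | ∃ X ∈ Bl, Z = (QuotientAddGroup.mk : G → G ⧸ L) '' X}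

/-- The basic sets of `A_S` for the section `S = U/L`: images under `U → U/L` of the
basic sets contained in `U`. -/
def secBlocks {G : Type*} [AddGroup G] (Bl : Set (Set G)) (U L : AddSubgroup G) :
    Set (Set (U ⧸ L.addSubgroupOf U)) :=
  {Z | ∃ X ∈ Bl, X ⊆ (U : Set G) ∧
    Z = (QuotientAddGroup.mk : U → U ⧸ L.addSubgroupOf U) '' {u : U | (u : G) ∈ X}}

/-- The permutations of an (invariant) subgroup `U` induced by members of `F`. -/
def inducedPerm {G : Type*} [AddGroup G] (F : Set (Equiv.Perm G)) (U : AddSubgroup G) :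
    Set (Equiv.Perm U) :=
  {σ | ∃ f ∈ F, ∀ x : U, (σ x : G) = f (x : G)}

/-- The automorphisms of an (invariant) subgroup `U` induced by members of `F ⊆ Aut(G)`. -/
def inducedAddAut {G : Type*} [AddGroup G] (F : Set (AddAut G)) (U : AddSubgroup G) :
    Set (AddAut U) :=
  {σ | ∃ φ ∈ F, ∀ x : U, ((σ x : U) : G) = φ (x : G)}

/-- `S^f = S`: the permutation `f` maps `U` onto itself and permutes the `L`-cosets
inside `U`. -/
def secInvariant {G : Type*} [AddGroup G] (f : Equiv.Perm G) (U L : AddSubgroup G) : Prop :=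
  ⇑f '' (U : Set G) = (U : Set G) ∧
    ∀ u ∈ U, ⇑f '' ((L : Set G) + {u}) = (L : Set G) + {f u}

/-- `σ` is the bijection `f^S` of the section `S = U/L` induced by `f`. -/
def inducesOnSec {G : Type*} [AddGroup G] (f : Equiv.Perm G) (U L : AddSubgroup G)
    (σ : Equiv.Perm (U ⧸ L.addSubgroupOf U)) : Prop :=
  ∀ u v : U, f (u : G) = (v : G) →
    σ (QuotientAddGroup.mk u) = QuotientAddGroup.mk v

/-- `Δ^S`: the bijections of the section `S = U/L` induced by members of `Δ`
leaving `S` invariant. -/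
def secPerms {G : Type*} [AddGroup G] (F : Set (Equiv.Perm G)) (U L : AddSubgroup G) :
    Set (Equiv.Perm (U ⧸ L.addSubgroupOf U)) :=
  {σ | ∃ f ∈ F, secInvariant f U L ∧ inducesOnSec f U L σ}

/-- `K^S` for `K ≤ Aut(U)`: automorphisms of `S = U/L` induced by members of `K`. -/
def secAutOfSub {G : Type*} [AddCommGroup G] (U L : AddSubgroup G)
    (K : Set (AddAut U)) : Set (AddAut (U ⧸ L.addSubgroupOf U)) :=
  {ψ | ∃ φ ∈ K, ∀ u : U, ψ (QuotientAddGroup.mk u) = QuotientAddGroup.mk (φ u)}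

/-- `K^S` for `K ≤ Aut(G/L)`: automorphisms of `S = U/L` obtained by restricting
members of `K`. -/
def secAutOfQuot {G : Type*} [AddCommGroup G] (U L : AddSubgroup G)
    (K : Set (AddAut (G ⧸ L))) : Set (AddAut (U ⧸ L.addSubgroupOf U)) :=
  {ψ | ∃ φ ∈ K, ∀ u v : U,
    φ (QuotientAddGroup.mk (u : G)) = QuotientAddGroup.mk (v : G) →
      ψ (QuotientAddGroup.mk u) = QuotientAddGroup.mk v}

/-! ### p-S-rings and some particular S-rings -/

/-- A `p`-S-ring: all basic sets have `p`-power size. -/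
def IsPSRing {G : Type*} [AddGroup G] (p : ℕ) (Bl : Set (Set G)) : Prop :=
  ∀ X ∈ Bl, ∃ k : ℕ, X.ncard = p ^ k

/-- The family `Bl` of basic sets is that of `ℤC_p ≀ ℤC_p ≀ ℤC_p`: singletons in `B1`,
`B1`-cosets in `B2 \ B1`, and `B2`-cosets outside `B2`. -/
def IsWr3Blocks {G : Type*} [AddGroup G] (p : ℕ) (Bl : Set (Set G)) : Prop :=
  ∃ B1 B2 : AddSubgroup G, B1 < B2 ∧ (B1 : Set G).ncard = p ∧
    (B2 : Set G).ncard = p ^ 2 ∧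
    ∀ X : Set G, X ∈ Bl ↔
      ((∃ x ∈ B1, X = {x}) ∨
        (∃ x ∈ (B2 : Set G) \ (B1 : Set G), X = (B1 : Set G) + {x}) ∨
        (∃ x ∈ (Set.univ : Set G) \ (B2 : Set G), X = (B2 : Set G) + {x}))

/-- The family `Bl` of basic sets is that of `ℤC_p ≀ ℤC_p²`: singletons in `B1` and
`B1`-cosets outside `B1`. -/
def IsWrCpCp2Blocks {G : Type*} [AddGroup G] (p : ℕ) (Bl : Set (Set G)) : Prop :=
  ∃ B1 : AddSubgroup G, (B1 : Set G).ncard = p ∧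
    ∀ X : Set G, X ∈ Bl ↔
      ((∃ x ∈ B1, X = {x}) ∨ (∃ x : G, x ∉ B1 ∧ X = (B1 : Set G) + {x}))

/-- The unipotent map `σ(x,y,z) = (x, x+y, y+z)` on `(ℤ/p)³` defining `D_p`. -/
def dpStep (p : ℕ) (v : Fin 3 → ZMod p) : Fin 3 → ZMod p :=
  ![v 0, v 0 + v 1, v 1 + v 2]

/-- The orbit of a point under the cyclic group generated by `σ`. -/
def dpOrbit (p : ℕ) (x : Fin 3 → ZMod p) : Set (Fin 3 → ZMod p) :=
  {y | ∃ k : ℕ, (dpStep p)^[k] x = y}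

/-- The family `Bl` of basic sets is (isomorphic to) that of the S-ring `D_p`. -/
def IsDpBlocks {W : Type*} [AddGroup W] (p : ℕ) (Bl : Set (Set W)) : Prop :=
  ∃ e : W ≃+ (Fin 3 → ZMod p), (fun X => ⇑e '' X) '' Bl = Set.range (dpOrbit p)

/-! ### Cayley graph automorphisms and regular subgroups -/

/-- `Aut(Cay(G,X))`. -/
def autCaySet {G : Type*} [AddGroup G] (X : Set G) : Set (Equiv.Perm G) :=
  {f | pmap f (arcs X) = arcs X}

/-- A regular subgroup of `Sym(G)`: transitive, and only the identity has a fixed point. -/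
def IsRegularSubgroup {G : Type*} (K : Subgroup (Equiv.Perm G)) : Prop :=
  (∀ a b : G, ∃ k ∈ K, k a = b) ∧ ∀ k ∈ K, (∃ a : G, k a = a) → k = 1

/-! ### The groups `C_p^4 × C_q` -/

/-- The Sylow `p`-subgroup `P` of `C_p^4 × C_q`. -/
def Psub (p q : ℕ) : AddSubgroup ((Fin 4 → ZMod p) × ZMod q) :=
  (⊤ : AddSubgroup (Fin 4 → ZMod p)).prod ⊥

/-- The Sylow `q`-subgroup `Q` of `C_p^4 × C_q`. -/
def Qsub (p q : ℕ) : AddSubgroup ((Fin 4 → ZMod p) × ZMod q) :=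
  (⊥ : AddSubgroup (Fin 4 → ZMod p)).prod ⊤


section CIhelp
set_option linter.unusedSectionVars false
variable {G : Type*} [AddGroup G]

lemma pmap_pmap (f g : Equiv.Perm G) (R : Set (G × G)) :
    pmap f (pmap g R) = pmap (f * g) R := by
  unfold pmap
  rw [← Set.image_comp]
  rfl

lemma pmap_one (R : Set (G × G)) : pmap (1 : Equiv.Perm G) R = R := by
  simp [pmap]

lemma mem_iff_arcs (S : Set G) (s : G) : s ∈ S ↔ (0, s) ∈ arcs S := by
  simp [arcs]

lemma arcs_inj {S T : Set G} (h : arcs S = arcs T) : S = T := by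
  ext s; rw [mem_iff_arcs S s, h, ← mem_iff_arcs]

lemma addRightPerm_apply (g x : G) : addRightPerm g x = x + g := rfl

lemma addRightPerm_mul (a b : G) :
    addRightPerm b * addRightPerm a = addRightPerm (a + b) := by
  ext x; simp [addRightPerm_apply, Equiv.Perm.mul_apply, add_assoc]

lemma addRightPerm_zero : addRightPerm (0 : G) = 1 := by
  ext x; simp [addRightPerm_apply]

lemma addRightPerm_inv (a : G) : (addRightPerm a)⁻¹ = addRightPerm (-a) :=
  (eq_inv_of_mul_eq_one_left (by rw [addRightPerm_mul, add_neg_cancel, addRightPerm_zero])).symm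

lemma pmap_addEquiv (φ : G ≃+ G) (S : Set G) :
    pmap (φ.toEquiv) (arcs S) = arcs (⇑φ '' S) := by
  ext ⟨a, b⟩
  constructor
  · rintro ⟨⟨x, y⟩, ⟨s, hs, hy⟩, h⟩
    simp only [Prod.mk.injEq, AddEquiv.coe_toEquiv] at h hy
    obtain ⟨ha, hb⟩ := h
    refine ⟨φ s, ⟨s, hs, rfl⟩, ?_⟩
    simp only at hy ⊢
    rw [← ha, ← hb, hy]
    exact map_add φ s x
  · rintro ⟨t, ⟨s, hs, rfl⟩, hb⟩
    have h1 : φ (φ.symm a) = a := φ.apply_symm_apply a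
    have h2 : φ (s + φ.symm a) = φ s + a := by rw [map_add, h1]
    refine ⟨(φ.symm a, s + φ.symm a), ⟨s, hs, rfl⟩, ?_⟩
    simp only at hb
    simp only [Prod.mk.injEq]
    exact ⟨h1, h2.trans hb.symm⟩

lemma pmap_addRightPerm (g : G) (S : Set G) :
    pmap (addRightPerm g) (arcs S) = arcs S := by
  ext ⟨a, b⟩
  constructor
  · rintro ⟨⟨x, y⟩, ⟨s, hs, hy⟩, h⟩
    simp only [Prod.mk.injEq, addRightPerm_apply] at h hy
    obtain ⟨ha, hb⟩ := h
    refine ⟨s, hs, ?_⟩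
    simp only at hy ⊢
    rw [← ha, ← hb, hy, add_assoc]
  · rintro ⟨s, hs, hb⟩
    refine ⟨(a + -g, b + -g), ⟨s, hs, ?_⟩, ?_⟩
    · simp only at hb ⊢; rw [hb, add_assoc]
    · simp [addRightPerm_apply, add_assoc, Prod.ext_iff]

lemma addRightPerm_mem_autCay (g : G) (X : Set G) : addRightPerm g ∈ autCaySet X :=
  pmap_addRightPerm g X

lemma autCay_mul {X : Set G} {f g : Equiv.Perm G}
    (hf : f ∈ autCaySet X) (hg : g ∈ autCaySet X) : f * g ∈ autCaySet X := by
  simp only [autCaySet, Set.mem_setOf_eq] at *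
  rw [← pmap_pmap, hg, hf]

lemma autCay_inv {X : Set G} {f : Equiv.Perm G}
    (hf : f ∈ autCaySet X) : f⁻¹ ∈ autCaySet X := by
  simp only [autCaySet, Set.mem_setOf_eq] at *
  conv_lhs => rw [← hf]
  rw [pmap_pmap, inv_mul_cancel, pmap_one]

/-- The right regular anti-representation as a hom of `Multiplicative G`. -/
def rhom (G : Type*) [AddGroup G] : Multiplicative G →* Equiv.Perm G :=
  MonoidHom.mk' (fun g => addRightPerm (-g.toAdd)) (fun a b => by
    simp [← addRightPerm_mul, neg_add_rev])

lemma rhom_apply (g : Multiplicative G) : rhom G g = addRightPerm (-g.toAdd) := rfl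

lemma rhom_injective : Function.Injective (rhom G) := by
  intro a b h
  have := congrArg (fun f => (f : Equiv.Perm G) 0) h
  simp only [rhom_apply, addRightPerm_apply, zero_add, neg_inj] at this
  exact Multiplicative.toAdd.injective this

lemma rhom_range_carrier : ((rhom G).range : Set (Equiv.Perm G)) = rSet G := by
  ext f
  simp only [MonoidHom.coe_range, Set.mem_range, rSet]
  constructor
  · rintro ⟨g, rfl⟩; exact ⟨-g.toAdd, rfl⟩
  · rintro ⟨g, rfl⟩; exact ⟨Multiplicative.ofAdd (-g), by simp [rhom_apply]⟩
end CIhelp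

section main
variable {G : Type*} [AddGroup G]

lemma exists_conj {X : Set G} (hCI : IsCISubset X)
    (H : Subgroup (Equiv.Perm G)) (hsub : (H : Set (Equiv.Perm G)) ⊆ autCaySet X)
    (hreg : IsRegularSubgroup H) (e : H ≃* Multiplicative G) :
    ∃ u ∈ autCaySet X,
      (fun t => u * t * u⁻¹) '' rSet G = (H : Set (Equiv.Perm G)) := by
  classical
  set ν := e.symm with hν
  set τ : G → Equiv.Perm G := fun g => ((ν (Multiplicative.ofAdd g))⁻¹ : H) with hτ
  have τmem : ∀ g, τ g ∈ H := fun g => SetLike.coe_mem _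
  have τmul : ∀ g x, τ g * τ x = τ (x + g) := by
    intro g x
    have h1 : (ν (Multiplicative.ofAdd g))⁻¹ * (ν (Multiplicative.ofAdd x))⁻¹
        = (ν (Multiplicative.ofAdd (x + g)))⁻¹ := by
      rw [← mul_inv_rev, ← map_mul, ← ofAdd_add]
    calc τ g * τ x
        = (((ν (Multiplicative.ofAdd g))⁻¹ * (ν (Multiplicative.ofAdd x))⁻¹ : H) :
            Equiv.Perm G) := rfl
      _ = _ := by rw [h1]
  have τinj : Function.Injective τ := by
    intro g h hgh
    have h1 : (ν (Multiplicative.ofAdd g))⁻¹ = (ν (Multiplicative.ofAdd h))⁻¹ :=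
      Subtype.ext hgh
    have h2 := ν.injective (inv_injective h1)
    exact Multiplicative.ofAdd.injective h2
  have τsurj : ∀ k ∈ H, ∃ g : G, τ g = k := by
    intro k hk
    refine ⟨-Multiplicative.toAdd (e ⟨k, hk⟩), ?_⟩
    show (((ν (Multiplicative.ofAdd (-Multiplicative.toAdd (e ⟨k, hk⟩))))⁻¹ : H) :
        Equiv.Perm G) = k
    rw [ofAdd_neg, ofAdd_toAdd, map_inv, inv_inv, hν,
      e.symm_apply_apply]
  have fixid : ∀ k ∈ H, k 0 = 0 → k = 1 := fun k hk h0 => hreg.2 k hk ⟨0, h0⟩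
  have fbinj : Function.Injective (fun g => τ g 0) := by
    intro g h hgh
    simp only at hgh
    apply τinj
    have hmem : (τ h)⁻¹ * τ g ∈ H := H.mul_mem (H.inv_mem (τmem h)) (τmem g)
    have h0 : ((τ h)⁻¹ * τ g) 0 = 0 := by
      simp only [Equiv.Perm.mul_apply]
      rw [hgh]
      exact Equiv.symm_apply_apply (τ h) 0
    have h1 := fixid _ hmem h0
    have h2 : τ h = τ g := inv_mul_eq_one.mp h1
    exact h2.symm
  have fbsurj : Function.Surjective (fun g => τ g 0) := by
    intro a
    obtain ⟨k, hk, hk0⟩ := hreg.1 0 a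
    obtain ⟨g, hg⟩ := τsurj k hk
    exact ⟨g, by simp only [hg]; exact hk0⟩
  set f : Equiv.Perm G := Equiv.ofBijective _ ⟨fbinj, fbsurj⟩ with hf
  have fap : ∀ g, f g = τ g 0 := fun g => rfl
  have key : ∀ g, f * addRightPerm g = τ g * f := by
    intro g; ext x
    simp only [Equiv.Perm.mul_apply, addRightPerm_apply, fap]
    rw [← τmul]
    rfl
  have keyρ : ∀ g, addRightPerm g = f⁻¹ * (τ g * f) := by
    intro g; rw [← key]; group
  have hAX : ∀ k ∈ H, pmap k (arcs X) = arcs X := fun k hk => hsub hk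
  have hInv : ∀ g, pmap (addRightPerm g) (pmap f⁻¹ (arcs X)) = pmap f⁻¹ (arcs X) := by
    intro g
    rw [pmap_pmap, keyρ g]
    have h1 : f⁻¹ * (τ g * f) * f⁻¹ = f⁻¹ * τ g := by group
    rw [h1, ← pmap_pmap, hAX _ (τmem g)]
  set T : Set G := {t : G | (0, t) ∈ pmap f⁻¹ (arcs X)} with hTdef
  have hT : pmap f⁻¹ (arcs X) = arcs T := by
    ext ⟨a, b⟩
    constructor
    · intro hab
      have h2 : ((addRightPerm (-a)) a, (addRightPerm (-a)) b) ∈ pmap f⁻¹ (arcs X) := by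
        rw [← hInv (-a)]; exact ⟨(a, b), hab, rfl⟩
      simp only [addRightPerm_apply, add_neg_cancel] at h2
      exact ⟨b + -a, h2, (neg_add_cancel_right b a).symm⟩
    · rintro ⟨s, hs, hb⟩
      simp only at hb
      have h2 : ((addRightPerm a) 0, (addRightPerm a) s) ∈ pmap f⁻¹ (arcs X) := by
        rw [← hInv a]; exact ⟨(0, s), hs, rfl⟩
      simp only [addRightPerm_apply, zero_add] at h2
      show (a, b) ∈ pmap f⁻¹ (arcs X)
      rw [hb]
      exact h2
  obtain ⟨φ, hφ⟩ := hCI T ⟨f⁻¹, hT⟩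
  have hφarc : pmap φ.toEquiv (arcs X) = arcs T := by rw [pmap_addEquiv, hφ]
  have keyφ : ∀ g : G,
      (φ.toEquiv : Equiv.Perm G) * addRightPerm g = addRightPerm (φ g) * φ.toEquiv := by
    intro g; ext x
    simp only [Equiv.Perm.mul_apply, addRightPerm_apply]
    exact map_add φ x g
  have hconj : ∀ g : G,
      (f * φ.toEquiv) * addRightPerm g * (f * φ.toEquiv)⁻¹ = τ (φ g) := by
    intro g
    have h1 : (f * φ.toEquiv) * addRightPerm g = τ (φ g) * (f * φ.toEquiv) := by
      rw [mul_assoc, keyφ g, ← mul_assoc, key (φ g), mul_assoc]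
    rw [h1]; group
  refine ⟨f * φ.toEquiv, ?_, ?_⟩
  · show pmap (f * φ.toEquiv) (arcs X) = arcs X
    rw [← pmap_pmap, hφarc, ← hT, pmap_pmap, mul_inv_cancel, pmap_one]
  · ext k
    constructor
    · rintro ⟨t, ⟨g, rfl⟩, rfl⟩
      show (f * φ.toEquiv) * addRightPerm g * (f * φ.toEquiv)⁻¹ ∈ (H : Set (Equiv.Perm G))
      rw [hconj g]
      exact τmem (φ g)
    · intro hk
      obtain ⟨g', hg'⟩ := τsurj k hk
      obtain ⟨g, rfl⟩ := φ.surjective g'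
      exact ⟨addRightPerm g, ⟨g, rfl⟩, (hconj g).trans hg'⟩

end main

/-- Babai's criterion. `X ⊆ G` is a CI-subset if and only if any two
regular subgroups of `Aut(Cay(G,X))` isomorphic to `G` are conjugate in
`Aut(Cay(G,X))`. -/
theorem statement18 (G : Type*) [AddGroup G] [Finite G] (X : Set G) :
    IsCISubset X ↔
      ∀ H1 H2 : Subgroup (Equiv.Perm G),
        (H1 : Set (Equiv.Perm G)) ⊆ autCaySet X →
        (H2 : Set (Equiv.Perm G)) ⊆ autCaySet X →
        IsRegularSubgroup H1 → IsRegularSubgroup H2 →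
        Nonempty (H1 ≃* Multiplicative G) → Nonempty (H2 ≃* Multiplicative G) →
        ∃ f ∈ autCaySet X, Subgroup.map (MulAut.conj f).toMonoidHom H1 = H2 := by
  constructor
  · -- CI implies conjugacy
    rintro hCI H1 H2 h1 h2 r1 r2 ⟨e1⟩ ⟨e2⟩
    obtain ⟨u1, hu1, hc1⟩ := exists_conj hCI H1 h1 r1 e1
    obtain ⟨u2, hu2, hc2⟩ := exists_conj hCI H2 h2 r2 e2
    refine ⟨u2 * u1⁻¹, autCay_mul hu2 (autCay_inv hu1), ?_⟩
    apply SetLike.ext'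
    rw [Subgroup.coe_map]
    have hfun : ⇑(MulAut.conj (u2 * u1⁻¹)).toMonoidHom
        = fun t : Equiv.Perm G => (u2 * u1⁻¹) * t * (u2 * u1⁻¹)⁻¹ := by
      funext t; simp only [MulEquiv.coe_toMonoidHom, MulAut.conj_apply, inv_inv]
    rw [hfun, ← hc1, Set.image_image]
    have heq : (fun t : Equiv.Perm G =>
          (u2 * u1⁻¹) * (u1 * t * u1⁻¹) * (u2 * u1⁻¹)⁻¹)
        = fun t : Equiv.Perm G => u2 * t * u2⁻¹ := by
      funext t; simp only [mul_inv_rev, inv_inv, mul_assoc, inv_mul_cancel_left]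
    rw [heq, hc2]
  · -- conjugacy implies CI
    rintro hconj T ⟨f, hf⟩
    set Gr := (rhom G).range with hGr
    have hGrcar : (Gr : Set (Equiv.Perm G)) = rSet G := rhom_range_carrier
    have hGrmem : ∀ g : G, addRightPerm g ∈ Gr := by
      intro g
      rw [← SetLike.mem_coe, hGrcar]
      exact ⟨g, rfl⟩
    have hGrsub : (Gr : Set (Equiv.Perm G)) ⊆ autCaySet X := by
      rw [hGrcar]
      rintro k ⟨g, rfl⟩
      exact addRightPerm_mem_autCay g X
    have hGreg : IsRegularSubgroup Gr := by
      constructor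
      · intro a b
        refine ⟨addRightPerm (-a + b), hGrmem _, ?_⟩
        rw [addRightPerm_apply, add_neg_cancel_left]
      · intro k hk hfix
        obtain ⟨a, ha⟩ := hfix
        rw [← SetLike.mem_coe, hGrcar] at hk
        obtain ⟨g, rfl⟩ := hk
        rw [addRightPerm_apply] at ha
        have hg0 : g = 0 := add_left_cancel (ha.trans (add_zero a).symm)
        rw [hg0, addRightPerm_zero]
    set H2 := Subgroup.map (MulAut.conj f⁻¹).toMonoidHom Gr with hH2
    have hconjfun : ⇑(MulAut.conj f⁻¹).toMonoidHom
        = fun t : Equiv.Perm G => f⁻¹ * t * f := by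
      funext t; simp only [MulEquiv.coe_toMonoidHom, MulAut.conj_apply, inv_inv]
    have hH2car : (H2 : Set (Equiv.Perm G))
        = (fun t : Equiv.Perm G => f⁻¹ * t * f) '' (Gr : Set (Equiv.Perm G)) := by
      rw [hH2, Subgroup.coe_map, hconjfun]
    have hH2sub : (H2 : Set (Equiv.Perm G)) ⊆ autCaySet X := by
      rw [hH2car, hGrcar]
      rintro k ⟨t, ⟨g, rfl⟩, rfl⟩
      show pmap (f⁻¹ * addRightPerm g * f) (arcs X) = arcs X
      rw [← pmap_pmap, ← pmap_pmap, hf, pmap_addRightPerm, ← hf, pmap_pmap,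
        inv_mul_cancel, pmap_one]
    have hH2reg : IsRegularSubgroup H2 := by
      constructor
      · intro a b
        obtain ⟨k, hk, hk2⟩ := hGreg.1 (f a) (f b)
        refine ⟨f⁻¹ * k * f, ?_, ?_⟩
        · rw [← SetLike.mem_coe, hH2car]
          exact ⟨k, hk, rfl⟩
        · simp only [Equiv.Perm.mul_apply]
          rw [hk2]
          exact Equiv.symm_apply_apply f b
      · intro k hk hfix
        rw [← SetLike.mem_coe, hH2car] at hk
        obtain ⟨t, ht, rfl⟩ := hk
        obtain ⟨a, ha⟩ := hfix
        simp only [Equiv.Perm.mul_apply] at ha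
        have h2 : t (f a) = f a := by
          have := congrArg f ha
          rwa [show ∀ x, f (f⁻¹ x) = x from fun x => f.apply_symm_apply x] at this
        have h3 : t = 1 := hGreg.2 t ht ⟨f a, h2⟩
        rw [h3]
        group
    have e1 : Gr ≃* Multiplicative G := (MonoidHom.ofInjective rhom_injective).symm
    have e2 : H2 ≃* Multiplicative G :=
      ((MulEquiv.subgroupMap (MulAut.conj f⁻¹ : Equiv.Perm G ≃* Equiv.Perm G)
        Gr).symm.trans e1)
    obtain ⟨w, hw, hmap⟩ := hconj Gr H2 hGrsub hH2sub hGreg hH2reg ⟨e1⟩ ⟨e2⟩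
    have hconjmem : ∀ g : G, ∃ g' : G,
        (f * w) * addRightPerm g * (f * w)⁻¹ = addRightPerm g' := by
      intro g
      have hin : (MulAut.conj w).toMonoidHom (addRightPerm g) ∈ H2 := by
        rw [← hmap]
        exact Subgroup.mem_map_of_mem _ (hGrmem g)
      rw [← SetLike.mem_coe, hH2car] at hin
      obtain ⟨t, ht, hteq⟩ := hin
      rw [hGrcar] at ht
      obtain ⟨g', rfl⟩ := ht
      refine ⟨g', ?_⟩
      have h2 : f⁻¹ * addRightPerm g' * f = w * addRightPerm g * w⁻¹ := by
        have h3 := hteq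
        simp only [MulEquiv.coe_toMonoidHom, MulAut.conj_apply] at h3
        exact h3
      calc (f * w) * addRightPerm g * (f * w)⁻¹
          = f * (w * addRightPerm g * w⁻¹) * f⁻¹ := by group
        _ = f * (f⁻¹ * addRightPerm g' * f) * f⁻¹ := by rw [h2]
        _ = addRightPerm g' := by group
    set c : G := (f * w) 0 with hc
    set h' : Equiv.Perm G := addRightPerm (-c) * (f * w) with hh'
    have h'0 : h' 0 = 0 := by
      rw [hh', Equiv.Perm.mul_apply, addRightPerm_apply, ← hc, add_neg_cancel]
    have hconj' : ∀ g : G, ∃ g' : G, h' * addRightPerm g * h'⁻¹ = addRightPerm g' := by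
      intro g
      obtain ⟨g₀, hg₀⟩ := hconjmem g
      refine ⟨c + (g₀ + -c), ?_⟩
      have hstep : h' * addRightPerm g * h'⁻¹
          = addRightPerm (-c) * ((f * w) * addRightPerm g * (f * w)⁻¹)
            * (addRightPerm (-c))⁻¹ := by
        rw [hh']; group
      rw [hstep, hg₀, addRightPerm_inv, neg_neg, addRightPerm_mul g₀ (-c),
        addRightPerm_mul c (g₀ + -c)]
    have hadd : ∀ x g : G, h' (x + g) = h' x + h' g := by
      intro x g
      obtain ⟨g', hg'⟩ := hconj' g
      have hx : ∀ y : G, h' (y + g) = h' y + g' := by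
        intro y
        have h1 := congrArg (fun p : Equiv.Perm G => p (h' y)) hg'
        simp only [Equiv.Perm.mul_apply, addRightPerm_apply,
          show ∀ x, h'⁻¹ (h' x) = x from fun x => h'.symm_apply_apply x] at h1
        exact h1
      have h0 : h' g = g' := by
        have := hx 0
        rwa [zero_add, h'0, zero_add] at this
      rw [hx x, h0]
    refine ⟨{ toEquiv := h', map_add' := hadd }, ?_⟩
    apply arcs_inj
    rw [← pmap_addEquiv]
    show pmap h' (arcs X) = arcs T
    have hwX : pmap w (arcs X) = arcs X := hw
    rw [hh', ← pmap_pmap, ← pmap_pmap, hwX, hf, pmap_addRightPerm]
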